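/- (Corollary 4) For any c > 0 and θ ∈ (0, π/2), no initial state (α, β, γ) of the RCA simultaneously satisfies the symmetry conditions (β + γ = 0, or |β| = |γ| > 0 with α = 0, or |β| = |γ| > 0, α ≠ 0, arg β + arg γ − 2 arg α ≡ π mod 2π) and the conservation conditions (|α|² = c, |β|²+|γ|² = c, β·conj(γ)+conj(β)·γ = 0, α(conj(β)−conj(γ))+conj(α)(β−γ) = 2c cos θ). -/

import Mathlib

theorem stmt16 (θ : ℝ) (hθ : θ ∈ Set.Ioo 0 (Real.pi / 2)) (c : ℝ) (hc : 0 < c)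
    (α β γ : ℂ) :
    ¬ ((β + γ = 0 ∨
          (‖β‖ = ‖γ‖ ∧ 0 < ‖β‖ ∧ α = 0) ∨
          (‖β‖ = ‖γ‖ ∧ 0 < ‖β‖ ∧ α ≠ 0 ∧
            ∃ m : ℤ, Complex.arg β + Complex.arg γ - 2 * Complex.arg α
              = Real.pi + 2 * Real.pi * m)) ∧
        (‖α‖ ^ 2 = c ∧ ‖β‖ ^ 2 + ‖γ‖ ^ 2 = c ∧
          β * (starRingEnd ℂ) γ + (starRingEnd ℂ) β * γ = 0 ∧
          α * ((starRingEnd ℂ) β - (starRingEnd ℂ) γ) + (starRingEnd ℂ) α * (β - γ)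
            = ((2 * c * Real.cos θ : ℝ) : ℂ))) := by
  rintro ⟨hsym, h1, h2, h3, h4⟩
  obtain ⟨hθ0, hθ2⟩ := hθ
  have hcos : 0 < Real.cos θ :=
    Real.cos_pos_of_mem_Ioo ⟨by linarith [Real.pi_pos], hθ2⟩
  have hcos1 : Real.cos θ < 1 := by
    have := Real.cos_lt_cos_of_nonneg_of_le_pi (le_refl 0)
      (by linarith [Real.pi_pos]) hθ0
    simpa using this
  rcases hsym with h | ⟨hbg, hbpos, hα0⟩ | ⟨hbg, hbpos, hα0, m, hm⟩
  · -- Case β + γ = 0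
    have hγ : γ = -β := by linear_combination h
    subst hγ
    have hβ0 : β = 0 := by
      have hmc : β * (starRingEnd ℂ) β = 0 := by
        have := h3
        simp only [map_neg, mul_neg, neg_mul] at this
        linear_combination -this / 2
      rw [Complex.mul_conj] at hmc
      have : Complex.normSq β = 0 := by exact_mod_cast hmc
      exact Complex.normSq_eq_zero.mp this
    rw [hβ0] at h2
    simp at h2
    linarith
  · -- Case α = 0
    rw [hα0] at h1
    simp at h1
    linarith
  · -- Main case
    have hβ0 : β ≠ 0 := by
      intro h; rw [h] at hbpos; simp at hbpos
    have hγ0 : γ ≠ 0 := by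
      intro h; rw [h] at hbg; simp at hbg; exact hβ0 hbg
    set ra := ‖α‖ with hra
    set rb := ‖β‖ with hrb
    set rg := ‖γ‖ with hrg
    set aa := Complex.arg α with haa
    set ab := Complex.arg β with hab
    set ag := Complex.arg γ with hag
    have hβr : β = (rb : ℂ) * Complex.exp (ab * Complex.I) :=
      (Complex.norm_mul_exp_arg_mul_I β).symm
    have hγr : γ = (rg : ℂ) * Complex.exp (ag * Complex.I) :=
      (Complex.norm_mul_exp_arg_mul_I γ).symm
    have hαr : α = (ra : ℂ) * Complex.exp (aa * Complex.I) :=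
      (Complex.norm_mul_exp_arg_mul_I α).symm
    have hconjα : (starRingEnd ℂ) α = (ra : ℂ) * Complex.exp ((-aa : ℝ) * Complex.I) := by
      conv_lhs => rw [hαr]
      rw [map_mul, Complex.conj_ofReal, ← Complex.exp_conj]
      congr 1
      simp only [map_mul, Complex.conj_ofReal, Complex.conj_I]
      push_cast
      ring
    set u := (starRingEnd ℂ) α * β with hu
    have hu0 : u ≠ 0 := mul_ne_zero (by simpa using hα0) hβ0
    have hexp2 : Complex.exp (((Real.pi + 2 * Real.pi * m : ℝ) : ℂ) * Complex.I) = -1 := by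
      push_cast
      rw [show ((Real.pi : ℂ) + 2 * Real.pi * m) * Complex.I
          = Real.pi * Complex.I + (m : ℂ) * (2 * Real.pi * Complex.I) by ring]
      rw [Complex.exp_add, Complex.exp_pi_mul_I, Complex.exp_int_mul_two_pi_mul_I]
      ring
    have key : u * ((starRingEnd ℂ) α * γ) = -(((ra ^ 2 * rb * rg : ℝ)) : ℂ) := by
      calc u * ((starRingEnd ℂ) α * γ)
          = ((ra : ℂ) * rb * ra * rg) *
            (Complex.exp ((-aa : ℝ) * Complex.I) * Complex.exp (ab * Complex.I) *
             (Complex.exp ((-aa : ℝ) * Complex.I) * Complex.exp (ag * Complex.I))) := by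
            rw [hu, hconjα, hβr, hγr]
            ring
        _ = ((ra : ℂ) * rb * ra * rg) *
            Complex.exp (((ab + ag - 2 * aa : ℝ) : ℂ) * Complex.I) := by
            rw [← Complex.exp_add, ← Complex.exp_add, ← Complex.exp_add]
            congr 2
            push_cast
            ring
        _ = ((ra : ℂ) * rb * ra * rg) *
            Complex.exp (((Real.pi + 2 * Real.pi * m : ℝ) : ℂ) * Complex.I) := by
            rw [hm]
        _ = -(((ra ^ 2 * rb * rg : ℝ)) : ℂ) := by
            rw [hexp2]
            push_cast
            ring
    -- norms
    have hra2 : ra ^ 2 = c := by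
      exact h1
    have hrbg : rb = rg := by
      exact hbg
    have hrb2 : rb ^ 2 = c / 2 := by
      rw [← hbg] at h2
      linarith
    have hprod : u * (starRingEnd ℂ) u = ((c ^ 2 / 2 : ℝ) : ℂ) := by
      rw [Complex.mul_conj]
      have : Complex.normSq u = c ^ 2 / 2 := by
        rw [Complex.normSq_eq_norm_sq, hu, norm_mul, Complex.norm_conj, ← hra, ← hrb]
        nlinarith [hra2, hrb2]
      rw [this]
    have hv : (starRingEnd ℂ) α * γ = -((starRingEnd ℂ) u) := by
      apply mul_left_cancel₀ hu0
      rw [key, mul_neg, Complex.mul_conj]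
      have : Complex.normSq u = ra ^ 2 * rb * rg := by
        rw [Complex.normSq_eq_norm_sq, hu, norm_mul, Complex.norm_conj, ← hra, ← hrb, hrbg]
        ring
      rw [this]
    -- derive u² + ū² = 0
    have e1 : u * (starRingEnd ℂ) ((starRingEnd ℂ) α * γ)
        + (starRingEnd ℂ) u * ((starRingEnd ℂ) α * γ)
        = (α * (starRingEnd ℂ) α) * (β * (starRingEnd ℂ) γ + (starRingEnd ℂ) β * γ) := by
      rw [hu]
      simp only [map_mul, Complex.conj_conj]
      ring
    rw [hv, h3, mul_zero] at e1
    simp only [map_neg, Complex.conj_conj] at e1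
    have hsq : u ^ 2 + ((starRingEnd ℂ) u) ^ 2 = 0 := by linear_combination -e1
    -- derive u + ū = c cos θ
    have e2 : (starRingEnd ℂ) u - (starRingEnd ℂ) ((starRingEnd ℂ) α * γ)
        + (u - (starRingEnd ℂ) α * γ)
        = α * ((starRingEnd ℂ) β - (starRingEnd ℂ) γ) + (starRingEnd ℂ) α * (β - γ) := by
      rw [hu]
      simp only [map_mul, map_sub, Complex.conj_conj]
      ring
    rw [hv, h4] at e2
    simp only [map_neg, Complex.conj_conj] at e2
    have hsum : u + (starRingEnd ℂ) u = ((c * Real.cos θ : ℝ) : ℂ) := by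
      push_cast at e2 ⊢
      linear_combination e2 / 2
    -- combine
    have hfin : ((c * Real.cos θ : ℝ) : ℂ) ^ 2 = ((c ^ 2 : ℝ) : ℂ) := by
      rw [← hsum]
      push_cast at hprod ⊢
      linear_combination hsq + 2 * hprod
    have hfinr : (c * Real.cos θ) ^ 2 = c ^ 2 := by exact_mod_cast hfin
    have hcs : Real.cos θ ^ 2 < 1 := by nlinarith
    nlinarith [hfinr, hcs, mul_pos hc hc]
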